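/- Let m ≥ 1, let D_1, …, D_m ≥ 1 with n = D_1 + ⋯ + D_m, and let a ≥ 1. Let v : {1,…,n} → {1,…,m} be the sorted deck (D_1 values equal to 1, followed by D_2 values equal to 2, …, followed by D_m values equal to m, in weakly increasing order), and let w* be the reversed deck (weakly decreasing: D_m values equal to m on top down to D_1 values equal to 1). Then among all decks w : {1,…,n} → {1,…,m} having exactly D_i entries equal to i for each i, the probability Q_a^v(w) of obtaining w from an a-shuffle of v is minimized at w = w*: Q_a^v(w*) ≤ Q_a^v(w) for every such w. -/

import Mathlib

/-- `σ` is the stable-sort permutation of `f`: `f ∘ σ` is weakly increasing and `σ` is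
increasing on each level set of `f ∘ σ`. -/
def IsStableSort {n a : ℕ} (f : Fin n → Fin a) (σ : Equiv.Perm (Fin n)) : Prop :=
  Monotone (f ∘ σ) ∧ ∀ i j : Fin n, i < j → f (σ i) = f (σ j) → σ i < σ j

section Aux

open Finset

/-- For a monotone `g : Fin n → Fin m`, membership `g i ≤ c` is equivalent to
`i` being below the number of positions with value `≤ c`. -/
lemma monotone_le_iff_lt_card {n m : ℕ} {g : Fin n → Fin m} (hg : Monotone g)
    (c : Fin m) (i : Fin n) :
    g i ≤ c ↔ (i : ℕ) < (Finset.univ.filter fun p => g p ≤ c).card := by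
  constructor
  · intro h
    have hsub : Finset.Iic i ⊆ Finset.univ.filter fun p => g p ≤ c := by
      intro j hj
      simp only [Finset.mem_Iic] at hj
      simp only [Finset.mem_filter, Finset.mem_univ, true_and]
      exact le_trans (hg hj) h
    have := Finset.card_le_card hsub
    have hIic : (Finset.Iic i).card = (i : ℕ) + 1 := Fin.card_Iic i
    omega
  · intro h
    by_contra hc
    have hsub : (Finset.univ.filter fun p => g p ≤ c) ⊆ Finset.Iio i := by
      intro j hj
      simp only [Finset.mem_filter, Finset.mem_univ, true_and] at hj
      simp only [Finset.mem_Iio]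
      by_contra hji
      push_neg at hji
      exact hc (le_trans (hg hji) hj)
    have := Finset.card_le_card hsub
    have hIio : (Finset.Iio i).card = (i : ℕ) := Fin.card_Iio i
    omega

/-- The number of positions with value `≤ c` equals the sum of fiber sizes. -/
lemma card_le_filter_eq_sum {n m : ℕ} (g : Fin n → Fin m) (c : Fin m) :
    (Finset.univ.filter fun p => g p ≤ c).card
      = ∑ b ∈ Finset.Iic c, (Finset.univ.filter fun p => g p = b).card := by
  rw [Finset.card_eq_sum_card_fiberwise
    (f := g) (t := Finset.Iic c)
    (fun x hx => by simpa using (Finset.mem_filter.mp hx).2)]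
  apply Finset.sum_congr rfl
  intro b hb
  congr 1
  ext p
  simp only [Finset.mem_filter, Finset.mem_univ, true_and, and_iff_right_iff_imp]
  intro hp
  rw [hp]
  simpa using hb

/-- Two monotone functions `Fin n → Fin m` with the same fiber cardinalities are equal. -/
lemma monotone_eq_of_card_fiber_eq {n m : ℕ} {g₁ g₂ : Fin n → Fin m}
    (h₁ : Monotone g₁) (h₂ : Monotone g₂)
    (h : ∀ c, (Finset.univ.filter fun p => g₁ p = c).card
      = (Finset.univ.filter fun p => g₂ p = c).card) : g₁ = g₂ := by
  have key : ∀ c, (Finset.univ.filter fun p => g₁ p ≤ c).card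
      = (Finset.univ.filter fun p => g₂ p ≤ c).card := by
    intro c
    rw [card_le_filter_eq_sum, card_le_filter_eq_sum]
    exact Finset.sum_congr rfl fun b _ => h b
  funext i
  apply le_antisymm
  · rw [monotone_le_iff_lt_card h₁, key, ← monotone_le_iff_lt_card h₂]
  · rw [monotone_le_iff_lt_card h₂, ← key, ← monotone_le_iff_lt_card h₁]

/-- Stability: if `(f p, p) <lex (f q, q)` then `p` comes strictly before `q`
in the stable sort order. -/
lemma stable_symm_lt {n a : ℕ} {f : Fin n → Fin a} {σ : Equiv.Perm (Fin n)}
    (h : IsStableSort f σ) {p q : Fin n}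
    (hpq : f p < f q ∨ (f p = f q ∧ p < q)) : σ.symm p < σ.symm q := by
  have hne : p ≠ q := by
    rcases hpq with h' | ⟨_, h'⟩
    · intro he; rw [he] at h'; exact lt_irrefl _ h'
    · exact ne_of_lt h'
  have hij : σ.symm p ≠ σ.symm q := fun he => hne (by
    have := congrArg σ he; simpa using this)
  rcases lt_or_gt_of_ne hij with h' | h'
  · exact h'
  · exfalso
    have hle : f (σ (σ.symm q)) ≤ f (σ (σ.symm p)) := h.1 (le_of_lt h')
    simp only [Equiv.apply_symm_apply] at hle
    rcases hpq with hlt | ⟨heq, hplt⟩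
    · exact absurd hle (not_le_of_gt hlt)
    · have := h.2 (σ.symm q) (σ.symm p) h' (by simp [heq])
      simp only [Equiv.apply_symm_apply] at this
      exact absurd this (not_lt_of_gt hplt)

/-- If stable-sorting `wstar` by digits `f` gives the sorted deck `v`, then `f`
strictly decreases along every strict decrease of the antitone deck `wstar`. -/
lemma digit_strict {n a m : ℕ} {f : Fin n → Fin a} {σ : Equiv.Perm (Fin n)}
    (h : IsStableSort f σ) {wstar v : Fin n → Fin m}
    (hws : Antitone wstar) (hv : Monotone v) (hsort : wstar ∘ σ = v)
    {p q : Fin n} (hpq : wstar q < wstar p) : f q < f p := by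
  by_contra hc
  push_neg at hc
  have hplt : p < q := by
    rcases lt_trichotomy p q with h' | h' | h'
    · exact h'
    · exfalso; rw [h'] at hpq; exact lt_irrefl _ hpq
    · exact absurd (hws (le_of_lt h')) (not_le_of_gt hpq)
  have hlex : f p < f q ∨ (f p = f q ∧ p < q) := by
    rcases lt_or_eq_of_le hc with h' | h'
    · exact Or.inl h'
    · exact Or.inr ⟨h', hplt⟩
  have hlt := stable_symm_lt h hlex
  have h1 : v (σ.symm p) = wstar p := by
    have := congrFun hsort (σ.symm p); simpa using this.symm
  have h2 : v (σ.symm q) = wstar q := by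
    have := congrFun hsort (σ.symm q); simpa using this.symm
  have := hv (le_of_lt hlt)
  rw [h1, h2] at this
  exact absurd this (not_le_of_gt hpq)

/-- Fiber counts are invariant under precomposition with a permutation. -/
lemma card_fiber_comp {n m : ℕ} (e : Equiv.Perm (Fin n)) (w : Fin n → Fin m) (c : Fin m) :
    (Finset.univ.filter fun i => w (e i) = c).card
      = (Finset.univ.filter fun p => w p = c).card := by
  rw [← Fintype.card_subtype, ← Fintype.card_subtype]
  exact Fintype.card_congr (e.subtypeEquiv fun i => by simp)

end Aux

/-- After an `a`-shuffle of the sorted deck `v` (with `D_1` cards labelled `1` on top down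
to `D_m` cards labelled `m` on the bottom), the least likely deck is the reversed deck `w*`
(`m`'s on top down to `1`'s on the bottom): `Q_a^v(w*) ≤ Q_a^v(w)` for every deck `w` with
the same multiset of labels, where `Q_a^v(w) = a^{-n}·#{f : w ∘ σ_f = v}`. -/
theorem reversed_deck_least_likely (m : ℕ) (hm : 1 ≤ m) (D : Fin m → ℕ) (hD : ∀ c, 1 ≤ D c)
    (n : ℕ) (hn : n = ∑ c, D c) (a : ℕ) (ha : 1 ≤ a)
    (σ : (Fin n → Fin a) → Equiv.Perm (Fin n)) (hσ : ∀ f, IsStableSort f (σ f))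
    (v : Fin n → Fin m) (hv : Monotone v)
    (hvD : ∀ c, (Finset.univ.filter fun p => v p = c).card = D c)
    (wstar : Fin n → Fin m) (hwstar : Antitone wstar)
    (hwstarD : ∀ c, (Finset.univ.filter fun p => wstar p = c).card = D c)
    (w : Fin n → Fin m)
    (hwD : ∀ c, (Finset.univ.filter fun p => w p = c).card = D c) :
    ((Finset.univ.filter fun f : Fin n → Fin a => wstar ∘ σ f = v).card : ℚ) / (a : ℚ) ^ n
      ≤ ((Finset.univ.filter fun f : Fin n → Fin a => w ∘ σ f = v).card : ℚ) / (a : ℚ) ^ n := by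
  classical
  -- a value-preserving bijection from positions of `w` to positions of `wstar`
  obtain ⟨e, he⟩ : ∃ e : Fin n ≃ Fin n, ∀ p, wstar (e p) = w p := by
    have fibers : ∀ c : Fin m, { p // w p = c } ≃ { p // wstar p = c } := by
      intro c
      apply Fintype.equivOfCardEq
      rw [Fintype.card_subtype, Fintype.card_subtype, hwD c, hwstarD c]
    exact ⟨Equiv.ofFiberEquiv fibers, fun p => Equiv.ofFiberEquiv_map fibers p⟩
  -- the key cardinality inequality via the injection f ↦ f ∘ e
  have hcard : (Finset.univ.filter fun f : Fin n → Fin a => wstar ∘ σ f = v).card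
      ≤ (Finset.univ.filter fun f : Fin n → Fin a => w ∘ σ f = v).card := by
    apply Finset.card_le_card_of_injOn (fun f => f ∘ e)
    · -- maps into the target set
      intro f hf
      simp only [Finset.mem_coe, Finset.mem_filter, Finset.mem_univ, true_and] at hf ⊢
      set g : Fin n → Fin a := f ∘ e with hg
      -- g strictly decreases along strict decreases of w
      have hgw : ∀ p q : Fin n, w q < w p → g q < g p := by
        intro p q hpq
        have : wstar (e q) < wstar (e p) := by rw [he p, he q]; exact hpq
        exact digit_strict (hσ f) hwstar hv hf this
      -- hence w ∘ σ g is monotone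
      have hmono : Monotone (w ∘ σ g) := by
        intro i j hij
        by_contra hc
        push_neg at hc
        have h1 : g (σ g j) < g (σ g i) := hgw _ _ hc
        have h2 : g (σ g i) ≤ g (σ g j) := (hσ g).1 hij
        exact absurd h2 (not_le_of_gt h1)
      -- equal fiber counts with v, hence equal
      apply monotone_eq_of_card_fiber_eq hmono hv
      intro c
      rw [hvD c, ← hwD c]
      exact card_fiber_comp (σ g) w c
    · -- injective
      intro f₁ _ f₂ _ hfe
      funext p
      have := congrFun hfe (e.symm p)
      simpa using this
  have hpos : (0 : ℚ) < (a : ℚ) ^ n := by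
    have : (1 : ℚ) ≤ (a : ℚ) := by exact_mod_cast ha
    exact pow_pos (lt_of_lt_of_le one_pos this) n
  exact div_le_div_of_nonneg_right (by exact_mod_cast hcard) hpos.le
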